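/- Let H be a bialgebra over ℤ, let e be a curve in H, and let φ_e : NSymm → H be the unique ring homomorphism with φ_e(Z_i) = e(i) for all i ≥ 1. Then: (i) for every curve d in NSymm, the sequence n ↦ φ_e(d(n)) is a curve in H; (ii) if H = NSymm (with the comultiplication Δ defined below) and both d and e are V-curves, then n ↦ φ_e(d(n)) is a V-curve. -/

import Mathlib

open scoped TensorProduct

set_option linter.unnecessarySimpa false

noncomputable section

/-- `NSymm`, the free ring on `Z₁, Z₂, …`; generator `i : ℕ` represents `Z_{i+1}`. -/
abbrev NSymm : Type := MonoidAlgebra ℤ (FreeMonoid ℕ)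

def Zgen : ℕ → NSymm
  | 0 => 1
  | n + 1 => MonoidAlgebra.of ℤ (FreeMonoid ℕ) (FreeMonoid.of n)

def Zword (l : List ℕ) : NSymm := (l.map Zgen).prod

def Delta : NSymm →ₐ[ℤ] NSymm ⊗[ℤ] NSymm :=
  MonoidAlgebra.lift ℤ (NSymm ⊗[ℤ] NSymm) (FreeMonoid ℕ)
    (FreeMonoid.lift fun i =>
      ∑ a ∈ Finset.range (i + 2), Zgen a ⊗ₜ[ℤ] Zgen (i + 1 - a))

def IsPrimitive (P : NSymm) : Prop :=
  Delta P = 1 ⊗ₜ[ℤ] P + P ⊗ₜ[ℤ] 1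

def Ver (r : ℕ) : NSymm →ₐ[ℤ] NSymm :=
  MonoidAlgebra.lift ℤ NSymm (FreeMonoid ℕ)
    (FreeMonoid.lift fun i => if r ∣ (i + 1) then Zgen ((i + 1) / r) else 0)

def NewtonP (n : ℕ) : NSymm :=
  ∑ c : Composition n,
    ((-1 : ℤ) ^ (c.length + 1) * (c.blocks.getLastD 0 : ℤ)) • Zword c.blocks

def IsComposition (l : List ℕ) : Prop := l ≠ [] ∧ ∀ a ∈ l, 0 < a

def lexLt (l l' : List ℕ) : Prop := List.Lex (· < ·) l l'

def IsLyndon (l : List ℕ) : Prop :=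
  IsComposition l ∧ ∀ i, 0 < i → i < l.length → lexLt l (l.drop i)

def gcdL (l : List ℕ) : ℕ := l.foldr Nat.gcd 0

def wtC (l : List ℕ) : ℕ := l.sum

def wllLt (l l' : List ℕ) : Prop :=
  wtC l < wtC l' ∨ (wtC l = wtC l' ∧
    (l.length < l'.length ∨ (l.length = l'.length ∧ lexLt l l')))

def coeffw (P : NSymm) (w : FreeMonoid ℕ) : ℤ := P.coeff w

def coeffC (P : NSymm) (l : List ℕ) : ℤ := coeffw P (FreeMonoid.ofList (l.map (· - 1)))

def wtWord (w : FreeMonoid ℕ) : ℕ := (FreeMonoid.toList w).sum + (FreeMonoid.toList w).length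

def IsHomog (P : NSymm) (n : ℕ) : Prop := ∀ w, coeffw P w ≠ 0 → wtWord w = n

abbrev TwoNSymm : Type := MonoidAlgebra ℤ (FreeMonoid (ℕ ⊕ ℕ))

def Xgen : ℕ → TwoNSymm
  | 0 => 1
  | n + 1 => MonoidAlgebra.of ℤ (FreeMonoid (ℕ ⊕ ℕ)) (FreeMonoid.of (Sum.inl n))

def Ygen : ℕ → TwoNSymm
  | 0 => 1
  | n + 1 => MonoidAlgebra.of ℤ (FreeMonoid (ℕ ⊕ ℕ)) (FreeMonoid.of (Sum.inr n))

def Delta2 : TwoNSymm →ₐ[ℤ] TwoNSymm ⊗[ℤ] TwoNSymm :=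
  MonoidAlgebra.lift ℤ (TwoNSymm ⊗[ℤ] TwoNSymm) (FreeMonoid (ℕ ⊕ ℕ))
    (FreeMonoid.lift fun s =>
      Sum.elim
        (fun i => ∑ a ∈ Finset.range (i + 2), Xgen a ⊗ₜ[ℤ] Xgen (i + 1 - a))
        (fun i => ∑ a ∈ Finset.range (i + 2), Ygen a ⊗ₜ[ℤ] Ygen (i + 1 - a)) s)

def Ver2 (r : ℕ) : TwoNSymm →ₐ[ℤ] TwoNSymm :=
  MonoidAlgebra.lift ℤ TwoNSymm (FreeMonoid (ℕ ⊕ ℕ))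
    (FreeMonoid.lift fun s =>
      Sum.elim
        (fun i => if r ∣ (i + 1) then Xgen ((i + 1) / r) else 0)
        (fun i => if r ∣ (i + 1) then Ygen ((i + 1) / r) else 0) s)

def coeffw2 (P : TwoNSymm) (w : FreeMonoid (ℕ ⊕ ℕ)) : ℤ := P.coeff w

def xwt (w : FreeMonoid (ℕ ⊕ ℕ)) : ℕ :=
  ((FreeMonoid.toList w).map (Sum.elim (· + 1) (fun _ => 0))).sum

def ywt (w : FreeMonoid (ℕ ⊕ ℕ)) : ℕ :=
  ((FreeMonoid.toList w).map (Sum.elim (fun _ => 0) (· + 1))).sum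

def wlLt (p q : ℕ × ℕ) : Prop :=
  p.1 + p.2 < q.1 + q.2 ∨ (p.1 + p.2 = q.1 + q.2 ∧ p.1 < q.1)

def reduceP (p : ℕ × ℕ) : ℕ × ℕ := (p.1 / Nat.gcd p.1 p.2, p.2 / Nat.gcd p.1 p.2)

def LIdentity (L : ℕ → ℕ → TwoNSymm) : Prop :=
  ∀ u v : ℕ, 1 ≤ u → 1 ≤ v →
    Xgen u * Ygen v - Ygen v * Xgen u =
      ∑ᶠ p ∈ {p : (ℕ × ℕ) × List (ℕ × ℕ) |
          p.2 ≠ [] ∧ (∀ q ∈ p.2, 0 < q.1 ∧ 0 < q.2) ∧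
          p.1.1 + (p.2.map Prod.fst).sum = u ∧
          p.1.2 + (p.2.map Prod.snd).sum = v ∧
          (p.2.map reduceP).Pairwise wlLt},
        Ygen p.1.2 * Xgen p.1.1 * (p.2.map fun q => L q.1 q.2).prod

def NIdentity (N : ℕ → ℕ → NSymm) : Prop :=
  ∀ u v : ℕ, 1 ≤ u → 1 ≤ v →
    (((u + v).choose u : ℤ)) • Zgen (u + v) =
      ∑ᶠ p ∈ {p : (ℕ × ℕ) × List (ℕ × ℕ) |
          (∀ q ∈ p.2, 0 < q.1 ∧ 0 < q.2) ∧
          p.1.1 + (p.2.map Prod.fst).sum = u ∧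
          p.1.2 + (p.2.map Prod.snd).sum = v ∧
          (p.2.map reduceP).Pairwise wlLt},
        Zgen p.1.1 * Zgen p.1.2 * (p.2.map fun q => N q.1 q.2).prod

def substXY (d1 d2 : ℕ → NSymm) : TwoNSymm →ₐ[ℤ] NSymm :=
  MonoidAlgebra.lift ℤ NSymm (FreeMonoid (ℕ ⊕ ℕ))
    (FreeMonoid.lift fun s => Sum.elim (fun i => d1 (i + 1)) (fun i => d2 (i + 1)) s)

def substZ (e : ℕ → NSymm) : NSymm →ₐ[ℤ] NSymm :=
  MonoidAlgebra.lift ℤ NSymm (FreeMonoid ℕ) (FreeMonoid.lift fun i => e (i + 1))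

def dSpec (L : ℕ → ℕ → TwoNSymm) (d : List ℕ → ℕ → NSymm) : Prop :=
  (∀ l, IsLyndon l → d l 0 = 1) ∧
  (∀ n, 0 < n → ∀ i, d [n] i = Zgen i) ∧
  (∀ l, IsLyndon l → 1 < l.length →
    ∀ i₀, 0 < i₀ → i₀ < l.length →
      (∀ j, 0 < j → j < l.length → ¬ lexLt (l.drop j) (l.drop i₀)) →
      ∀ i, d l i =
        substXY (d (l.take i₀)) (d (l.drop i₀))
          (L (i * gcdL (l.take i₀) / gcdL l) (i * gcdL (l.drop i₀) / gcdL l)))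

def Pof (d : List ℕ → ℕ → NSymm) (l : List ℕ) : NSymm := substZ (d l) (NewtonP (gcdL l))

def IsCurveN (c : ℕ → NSymm) : Prop :=
  c 0 = 1 ∧ ∀ n, Delta (c n) = ∑ i ∈ Finset.range (n + 1), c i ⊗ₜ[ℤ] c (n - i)

def IsCurve2 (c : ℕ → TwoNSymm) : Prop :=
  c 0 = 1 ∧ ∀ n, Delta2 (c n) = ∑ i ∈ Finset.range (n + 1), c i ⊗ₜ[ℤ] c (n - i)

def IsVCurveN (c : ℕ → NSymm) : Prop :=
  IsCurveN c ∧ ∀ r n, 1 ≤ r → 1 ≤ n → Ver r (c n) = if r ∣ n then c (n / r) else 0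

def IsCurveB (R : Type) [CommRing R] {H : Type} [Ring H] [Bialgebra R H] (c : ℕ → H) : Prop :=
  c 0 = 1 ∧ ∀ n, Coalgebra.comul (R := R) (c n) = ∑ i ∈ Finset.range (n + 1), c i ⊗ₜ[R] c (n - i)

def Is2CurveB (R : Type) [CommRing R] {H : Type} [Ring H] [Bialgebra R H]
    (c : ℕ → ℕ → H) : Prop :=
  c 0 0 = 1 ∧ ∀ n m, Coalgebra.comul (R := R) (c n m) =
    ∑ i ∈ Finset.range (n + 1), ∑ j ∈ Finset.range (m + 1),
      c i j ⊗ₜ[R] c (n - i) (m - j)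

def Mq (α : List ℕ) : MvPowerSeries ℕ ℤ :=
  fun m => if (m.support.sort (· ≤ ·)).map m = α then 1 else 0

def degm (m : ℕ →₀ ℕ) : ℕ := m.sum fun _ e => e

def QSymmMod : Submodule ℤ (MvPowerSeries ℕ ℤ) :=
  Submodule.span ℤ (insert 1 {f | ∃ α : List ℕ, IsComposition α ∧ f = Mq α})

abbrev NSymmQ : Type := MonoidAlgebra ℚ (FreeMonoid ℕ)

def ZgenQ : ℕ → NSymmQ
  | 0 => 1
  | n + 1 => MonoidAlgebra.of ℚ (FreeMonoid ℕ) (FreeMonoid.of n)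

def DeltaQ : NSymmQ →ₐ[ℚ] NSymmQ ⊗[ℚ] NSymmQ :=
  MonoidAlgebra.lift ℚ (NSymmQ ⊗[ℚ] NSymmQ) (FreeMonoid ℕ)
    (FreeMonoid.lift fun i =>
      ∑ a ∈ Finset.range (i + 2), ZgenQ a ⊗ₜ[ℚ] ZgenQ (i + 1 - a))

def IsPrimitiveQ (P : NSymmQ) : Prop :=
  DeltaQ P = 1 ⊗ₜ[ℚ] P + P ⊗ₜ[ℚ] 1

def toQ : NSymm →ₐ[ℤ] NSymmQ :=
  MonoidAlgebra.lift ℤ NSymmQ (FreeMonoid ℕ) (MonoidAlgebra.of ℚ (FreeMonoid ℕ))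


lemma ringHom_ext_Z {S : Type} [Ring S] (f g : NSymm →+* S)
    (h : ∀ n, f (Zgen (n + 1)) = g (Zgen (n + 1))) : ∀ x, f x = g x := by
  have hfg : f.toIntAlgHom = g.toIntAlgHom := by
    apply (MonoidAlgebra.lift ℤ S (FreeMonoid ℕ)).symm.injective
    ext n
    exact h n
  exact fun x => by
    rw [show f x = f.toIntAlgHom x from rfl, show g x = g.toIntAlgHom x from rfl, hfg]

lemma Delta_Zgen (n : ℕ) :
    Delta (Zgen (n + 1)) = ∑ a ∈ Finset.range (n + 2), Zgen a ⊗ₜ[ℤ] Zgen (n + 1 - a) := by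
  simp [Delta, Zgen]

lemma Ver_Zgen (r n : ℕ) :
    Ver r (Zgen (n + 1)) = if r ∣ (n + 1) then Zgen ((n + 1) / r) else 0 := by
  simp [Ver, Zgen]

/-- The substituted sequence is a curve w.r.t. any comultiplication-like ring hom. -/
lemma curve_sub_aux {H : Type} [Ring H] (Ψ : H →+* H ⊗[ℤ] H)
    (e : ℕ → H) (he0 : e 0 = 1)
    (heΨ : ∀ n, Ψ (e n) = ∑ i ∈ Finset.range (n + 1), e i ⊗ₜ[ℤ] e (n - i))
    (φ : NSymm →+* H) (hφ : ∀ i : ℕ, 1 ≤ i → φ (Zgen i) = e i)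
    (d : ℕ → NSymm) (hd : IsCurveN d) :
    ∀ n, Ψ (φ (d n)) = ∑ i ∈ Finset.range (n + 1), φ (d i) ⊗ₜ[ℤ] φ (d (n - i)) := by
  have hφ' : ∀ a, φ (Zgen a) = e a := by
    intro a
    cases a with
    | zero => simpa [Zgen, he0] using map_one φ
    | succ a => exact hφ (a + 1) (Nat.succ_le_succ (Nat.zero_le a))
  set G : NSymm →+* H ⊗[ℤ] H :=
    (Algebra.TensorProduct.map φ.toIntAlgHom φ.toIntAlgHom).toRingHom.comp Delta.toRingHom
    with hG
  have hGapp : ∀ x, G x =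
      (Algebra.TensorProduct.map φ.toIntAlgHom φ.toIntAlgHom) (Delta x) := fun _ => rfl
  have key : ∀ x, Ψ.comp φ x = G x := by
    apply ringHom_ext_Z
    intro n
    have h1 : Ψ.comp φ (Zgen (n + 1)) =
        ∑ i ∈ Finset.range (n + 2), e i ⊗ₜ[ℤ] e (n + 1 - i) := by
      rw [RingHom.comp_apply, hφ' (n + 1), heΨ (n + 1)]
    rw [h1, hGapp, Delta_Zgen, map_sum]
    refine Finset.sum_congr rfl fun a _ => ?_
    rw [Algebra.TensorProduct.map_tmul]
    simp only [RingHom.toIntAlgHom_apply, hφ']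
  intro n
  have h2 := key (d n)
  rw [RingHom.comp_apply] at h2
  rw [h2, hGapp, hd.2 n, map_sum]
  refine Finset.sum_congr rfl fun a _ => ?_
  rw [Algebra.TensorProduct.map_tmul]
  rfl

/-- Promote a ring hom out of `NSymm` to a `ℤ`-algebra hom, for any `Algebra ℤ H`. -/
def mkAlg {H : Type} [Ring H] [alg : Algebra ℤ H] (φ : NSymm →+* H) : NSymm →ₐ[ℤ] H :=
  { φ with
    commutes' := fun n => by
      have h1 : algebraMap ℤ H = Int.castRingHom H := by ext; simp
      have h2 : algebraMap ℤ NSymm = Int.castRingHom NSymm := by ext; simp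
      simp only [h1, h2, RingHom.toMonoidHom_eq_coe, OneHom.toFun_eq_coe,
        MonoidHom.toOneHom_coe, MonoidHom.coe_coe, eq_intCast, map_intCast] }

@[simp] lemma mkAlg_apply {H : Type} [Ring H] [Algebra ℤ H] (φ : NSymm →+* H) (x : NSymm) :
    mkAlg φ x = φ x := rfl

/-- Substituting a curve into a curve yields a curve; for `V`-curves in `NSymm`,
the result is again a `V`-curve. -/
theorem curve_substitution :
    (∀ (H : Type) [Ring H] [Bialgebra ℤ H], ∀ e : ℕ → H, IsCurveB ℤ e →
      ∀ φ : NSymm →+* H, (∀ i : ℕ, 1 ≤ i → φ (Zgen i) = e i) →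
      ∀ d : ℕ → NSymm, IsCurveN d → IsCurveB ℤ (fun n => φ (d n))) ∧
    (∀ e : ℕ → NSymm, IsVCurveN e →
      ∀ φ : NSymm →+* NSymm, (∀ i : ℕ, 1 ≤ i → φ (Zgen i) = e i) →
      ∀ d : ℕ → NSymm, IsVCurveN d → IsVCurveN (fun n => φ (d n))) := by
  constructor
  · intro H _ _ e he φ hφ d hd
    letI algH : Algebra ℤ H := Bialgebra.toAlgebra
    haveI towH := @IsScalarTower.of_algebraMap_eq ℤ ℤ H _ _ _ _ algH algH (fun _ => rfl)
    have hφ' : ∀ a, φ (Zgen a) = e a := by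
      intro a
      cases a with
      | zero => simpa [Zgen, he.1] using map_one φ
      | succ a => exact hφ (a + 1) (Nat.succ_le_succ (Nat.zero_le a))
    set G : NSymm →+* _ :=
      (Algebra.TensorProduct.map (mkAlg φ) (mkAlg φ)).toRingHom.comp Delta.toRingHom with hG
    set F : NSymm →+* _ := (Bialgebra.comulAlgHom ℤ H).toRingHom.comp φ with hF
    have key : ∀ x, F x = G x := by
      apply ringHom_ext_Z
      intro n
      show (Bialgebra.comulAlgHom ℤ H) (φ (Zgen (n + 1))) =
        (Algebra.TensorProduct.map (mkAlg φ) (mkAlg φ)) (Delta (Zgen (n + 1)))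
      rw [hφ' (n + 1), Bialgebra.comulAlgHom_apply, he.2 (n + 1), Delta_Zgen, map_sum]
      refine Finset.sum_congr rfl fun a _ => ?_
      rw [Algebra.TensorProduct.map_tmul, mkAlg_apply, mkAlg_apply, hφ' a, hφ' (n + 1 - a)]
    refine ⟨by simpa [hd.1] using map_one φ, fun n => ?_⟩
    refine Eq.trans (key (d n) : _) ?_
    show (Algebra.TensorProduct.map (mkAlg φ) (mkAlg φ)) (Delta (d n)) = _
    rw [hd.2 n, map_sum]
    refine Finset.sum_congr rfl fun a _ => ?_
    rw [Algebra.TensorProduct.map_tmul, mkAlg_apply, mkAlg_apply]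
  · intro e he φ hφ d hd
    have hφ' : ∀ a, φ (Zgen a) = e a := by
      intro a
      cases a with
      | zero => simpa [Zgen, he.1.1] using map_one φ
      | succ a => exact hφ (a + 1) (Nat.succ_le_succ (Nat.zero_le a))
    constructor
    · refine ⟨by simpa [hd.1.1] using map_one φ, ?_⟩
      exact curve_sub_aux Delta.toRingHom e he.1.1 he.1.2 φ hφ d hd.1
    · intro r n hr hn
      have hVer : ∀ x, ((Ver r).toRingHom.comp φ) x = (φ.comp (Ver r).toRingHom) x := by
        apply ringHom_ext_Z
        intro m
        have h1 : ((Ver r).toRingHom.comp φ) (Zgen (m + 1)) =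
            if r ∣ (m + 1) then e ((m + 1) / r) else 0 := by
          rw [RingHom.comp_apply]
          simp only [AlgHom.toRingHom_eq_coe, RingHom.coe_coe]
          rw [hφ' (m + 1), he.2 r (m + 1) hr (Nat.succ_le_succ (Nat.zero_le m))]
        rw [h1, RingHom.comp_apply]
        simp only [AlgHom.toRingHom_eq_coe, RingHom.coe_coe]
        rw [Ver_Zgen]
        split
        · next hdvd => rw [hφ']
        · next hdvd => exact (map_zero φ).symm
      have h2 := hVer (d n)
      rw [RingHom.comp_apply, RingHom.comp_apply] at h2
      simp only [AlgHom.toRingHom_eq_coe, RingHom.coe_coe] at h2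
      rw [h2, hd.2 r n hr hn]
      split
      · rfl
      · exact map_zero φ

end
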